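/- Let Ξ be a finite subset of a d-dimensional real vector space M whose convex hull is d-dimensional, let λ be a nonzero linear functional on M, and suppose Ξ_{λ>0} = {χ ∈ Ξ : λ(χ) > 0} is maximal among all sets Ξ_{μ>0} for nonzero linear functionals μ, and that conv(Ξ_{λ>0}) has dimension exactly d−1. Then Ξ_{λ>0} is not contained in any hyperplane of M passing through the origin. -/

import Mathlib

/-- If moreover `conv(Ξ_{λ>0})` has dimension exactly `d - 1`, then `Ξ_{λ>0}`
is not contained in any hyperplane through the origin. -/
theorem stmt3 {M : Type*} [AddCommGroup M] [Module ℝ M] [FiniteDimensional ℝ M]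
    (Ξ : Finset M) (hfull : affineSpan ℝ (Ξ : Set M) = ⊤)
    (lam : Module.Dual ℝ M) (hlam : lam ≠ 0)
    (hmax : ∀ μ : Module.Dual ℝ M, μ ≠ 0 →
      {χ : M | χ ∈ Ξ ∧ 0 < lam χ} ⊆ {χ : M | χ ∈ Ξ ∧ 0 < μ χ} →
      {χ : M | χ ∈ Ξ ∧ 0 < lam χ} = {χ : M | χ ∈ Ξ ∧ 0 < μ χ})
    (hdim : Module.finrank ℝ (affineSpan ℝ {χ : M | χ ∈ Ξ ∧ 0 < lam χ}).direction =
      Module.finrank ℝ M - 1) :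
    ∀ μ : Module.Dual ℝ M, μ ≠ 0 → ¬ (∀ χ ∈ Ξ, 0 < lam χ → μ χ = 0) := by
  intro μ hμ h
  -- First, find χ0 ∈ Ξ with μ χ0 ≠ 0.
  obtain ⟨χ0, hχ0Ξ, hχ0⟩ : ∃ χ0 ∈ Ξ, μ χ0 ≠ 0 := by
    by_contra hc
    push_neg at hc
    apply hμ
    -- Ξ is contained in the affine subspace through 0 with direction ker μ
    have hsub : (Ξ : Set M) ⊆ (AffineSubspace.mk' (0 : M) (LinearMap.ker μ) : Set M) := by
      intro χ hχ
      rw [SetLike.mem_coe, AffineSubspace.mem_mk']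
      simpa using hc χ hχ
    have := (affineSpan_le (k := ℝ)).mpr hsub
    rw [hfull] at this
    ext x
    have hx : x ∈ AffineSubspace.mk' (0 : M) (LinearMap.ker μ) :=
      this (AffineSubspace.mem_top ℝ M x)
    rw [AffineSubspace.mem_mk'] at hx
    simpa using hx
  -- Perturb lam by a multiple of μ to make χ0 positive, keeping Ξ_{lam>0} positive.
  set t : ℝ := (1 - lam χ0) / μ χ0 with ht
  set ν : Module.Dual ℝ M := lam + t • μ with hν
  have hνχ0 : ν χ0 = 1 := by
    simp only [hν, LinearMap.add_apply, LinearMap.smul_apply, smul_eq_mul, ht]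
    field_simp
    ring
  have hνne : ν ≠ 0 := by
    intro h0
    rw [h0] at hνχ0
    simp at hνχ0
  have hsubset : {χ : M | χ ∈ Ξ ∧ 0 < lam χ} ⊆ {χ : M | χ ∈ Ξ ∧ 0 < ν χ} := by
    rintro χ ⟨hχΞ, hχpos⟩
    refine ⟨hχΞ, ?_⟩
    have : μ χ = 0 := h χ hχΞ hχpos
    simp [hν, this, hχpos]
  have heq := hmax ν hνne hsubset
  have hχ0mem : χ0 ∈ {χ : M | χ ∈ Ξ ∧ 0 < ν χ} := ⟨hχ0Ξ, by rw [hνχ0]; norm_num⟩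
  rw [← heq] at hχ0mem
  exact hχ0 (h χ0 hχ0Ξ hχ0mem.2)
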